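/- For every tall summable ideal I_g there exists a tall summable ideal I_h such that I_g is not Katětov-below I_h, i.e., for every f: ℕ → ℕ there exists A ∈ I_g with f⁻¹[A] ∉ I_h. -/

import Mathlib

open Set Filter

/-- The summable ideal determined by `g`. -/
def Ig (g : ℕ → ℝ) : Set (Set ℕ) := {A | Summable (A.indicator g)}

/-- `g` determines a tall summable ideal: positive, divergent series, tends to `0`. -/
def SummableTall (g : ℕ → ℝ) : Prop :=
  (∀ n, 0 < g n) ∧ ¬ Summable g ∧ Tendsto g atTop (nhds 0)

noncomputable section NoMinConstruction

open scoped ENNReal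

/-- Summability of a nonnegative real function via the extended-real tsum. -/
lemma summable_iff_ofReal_ne_top {u : ℕ → ℝ} (hu : ∀ n, 0 ≤ u n) :
    Summable u ↔ (∑' n, ENNReal.ofReal (u n)) ≠ ∞ := by
  have h1 : (fun n => ((u n).toNNReal : ℝ)) = u := by
    funext n; exact Real.coe_toNNReal _ (hu n)
  have h2 : ∀ n, ENNReal.ofReal (u n) = ((u n).toNNReal : ℝ≥0∞) := fun n => rfl
  rw [tsum_congr h2]
  constructor
  · intro hs
    refine ENNReal.tsum_coe_ne_top_iff_summable.2 ?_
    rw [← NNReal.summable_coe, h1]; exact hs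
  · intro hs
    have := ENNReal.tsum_coe_ne_top_iff_summable.1 hs
    rw [← h1]; exact NNReal.summable_coe.2 this

/-- Fiberwise computation of the tsum of an indicator of a preimage. -/
lemma tsum_preimage_indicator (f : ℕ → ℕ) (u : ℕ → ℝ≥0∞) (A : Set ℕ) :
    ∑' n, (f ⁻¹' A).indicator u n
      = ∑' m, A.indicator (fun m' => ∑' n, (f ⁻¹' {m'}).indicator u n) m := by
  rw [← ENNReal.tsum_fiberwise (fun n => (f ⁻¹' A).indicator u n) f]
  refine tsum_congr fun m => ?_
  by_cases hm : m ∈ A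
  · rw [Set.indicator_of_mem hm, ← tsum_subtype]
    refine tsum_congr fun b => ?_
    obtain ⟨n, hn⟩ := b
    have hfn : f n = m := hn
    have : n ∈ f ⁻¹' A := by simp [Set.mem_preimage, hfn, hm]
    simp only [Set.indicator_of_mem this]
  · rw [Set.indicator_of_notMem hm]
    have : ∀ b : (f ⁻¹' {m} : Set ℕ), (f ⁻¹' A).indicator u b = 0 := by
      rintro ⟨n, hn⟩
      have hfn : f n = m := hn
      exact Set.indicator_of_notMem (by simp [Set.mem_preimage, hfn, hm]) u
    rw [tsum_congr this, tsum_zero]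

/-- Trim a finset of small values with large sum down to sum in `[1,2]`. -/
lemma trim_finset (μ : ℕ → ℝ≥0∞) :
    ∀ F : Finset ℕ, (∀ m ∈ F, μ m < 1) → 1 ≤ ∑ m ∈ F, μ m →
      ∃ F' ⊆ F, (1 ≤ ∑ m ∈ F', μ m) ∧ ∑ m ∈ F', μ m ≤ 2 := by
  intro F
  induction F using Finset.strongInductionOn with
  | _ F ih =>
    intro hlt h1
    by_cases h2 : ∑ m ∈ F, μ m ≤ 2
    · exact ⟨F, Finset.Subset.refl F, h1, h2⟩
    · push_neg at h2
      have hne : F.Nonempty := by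
        rcases Finset.eq_empty_or_nonempty F with h | h
        · rw [h, Finset.sum_empty] at h2
          exact absurd h2 (by simp)
        · exact h
      obtain ⟨a, ha⟩ := hne
      have hsum : ∑ m ∈ F, μ m = μ a + ∑ m ∈ F.erase a, μ m :=
        (Finset.add_sum_erase F μ ha).symm
      have h1' : 1 ≤ ∑ m ∈ F.erase a, μ m := by
        by_contra hcon
        push_neg at hcon
        have hlt2 : ∑ m ∈ F, μ m < 2 := by
          rw [hsum]
          calc μ a + ∑ m ∈ F.erase a, μ m < 1 + 1 := ENNReal.add_lt_add (hlt a ha) hcon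
            _ = 2 := one_add_one_eq_two
        exact absurd hlt2 (not_lt.2 h2.le)
      obtain ⟨F', hsub, hp⟩ := ih (F.erase a) (Finset.erase_ssubset ha)
        (fun m hm => hlt m (Finset.mem_of_mem_erase hm)) h1'
      exact ⟨F', hsub.trans (Finset.erase_subset a F), hp⟩

/-- From a set of infinite `μ`-mass, extract a finset of large elements of small
individual mass, with total mass in `[1,2]`. -/
lemma exists_step_finset (μ : ℕ → ℝ≥0∞) (hfin : ∀ m, μ m ≠ ∞)
    (hone : {m | 1 ≤ μ m}.Finite) (S : Set ℕ)
    (hS : ∑' m, S.indicator μ m = ∞) (N : ℕ) :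
    ∃ F : Finset ℕ, (∀ m ∈ F, m ∈ S ∧ N < m ∧ μ m < 1)
      ∧ 1 ≤ ∑ m ∈ F, μ m ∧ ∑ m ∈ F, μ m ≤ 2 := by
  classical
  set S' : Set ℕ := {m | m ∈ S ∧ N < m ∧ μ m < 1} with hS'
  set E : Finset ℕ := hone.toFinset ∪ Finset.range (N + 1) with hE
  have hpt : ∀ m, S.indicator μ m ≤ S'.indicator μ m + (↑E : Set ℕ).indicator μ m := by
    intro m
    by_cases hm : m ∈ S
    · by_cases hm' : m ∈ S'
      · rw [Set.indicator_of_mem hm, Set.indicator_of_mem hm']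
        exact le_self_add
      · have hm'' : N < m → 1 ≤ μ m := by
          intro hNm
          by_contra hcon
          exact hm' ⟨hm, hNm, not_le.1 hcon⟩
        have hmE : m ∈ E := by
          by_cases hNm : N < m
          · exact Finset.mem_union_left _ (hone.mem_toFinset.2 (hm'' hNm))
          · exact Finset.mem_union_right _ (Finset.mem_range.2 (by omega))
        rw [Set.indicator_of_mem hm, Set.indicator_of_mem (Finset.mem_coe.2 hmE)]
        exact le_add_self
    · rw [Set.indicator_of_notMem hm]
      exact zero_le
  have hEfin : ∑' m, (↑E : Set ℕ).indicator μ m ≠ ∞ := by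
    have heq : ∑' m, (↑E : Set ℕ).indicator μ m = ∑ m ∈ E, (↑E : Set ℕ).indicator μ m :=
      tsum_eq_sum fun m hm => Set.indicator_of_notMem (by simpa using hm) μ
    rw [heq]
    refine (ENNReal.sum_lt_top.2 fun m _ => ?_).ne
    by_cases h : m ∈ (↑E : Set ℕ)
    · rw [Set.indicator_of_mem h]; exact (hfin m).lt_top
    · rw [Set.indicator_of_notMem h]; exact ENNReal.zero_lt_top
  have hS'top : ∑' m, S'.indicator μ m = ∞ := by
    by_contra hcon
    have hle : ∑' m, S.indicator μ m
        ≤ ∑' m, S'.indicator μ m + ∑' m, (↑E : Set ℕ).indicator μ m := by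
      rw [← ENNReal.tsum_add]
      exact ENNReal.tsum_le_tsum hpt
    rw [hS] at hle
    exact ENNReal.add_ne_top.2 ⟨hcon, hEfin⟩ (top_le_iff.1 hle)
  have h1top : (1 : ℝ≥0∞) < ∑' m, S'.indicator μ m := by
    rw [hS'top]; exact ENNReal.one_lt_top
  rw [ENNReal.tsum_eq_iSup_sum] at h1top
  obtain ⟨s, hs⟩ := lt_iSup_iff.1 h1top
  set F0 : Finset ℕ := s.filter (fun m => m ∈ S') with hF0
  have hsum0 : ∑ m ∈ s, S'.indicator μ m = ∑ m ∈ F0, μ m := by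
    rw [hF0, Finset.sum_filter]
    refine Finset.sum_congr rfl fun m _ => ?_
    by_cases hm : m ∈ S'
    · rw [Set.indicator_of_mem hm, if_pos hm]
    · rw [Set.indicator_of_notMem hm, if_neg hm]
  have hmemF0 : ∀ m ∈ F0, m ∈ S ∧ N < m ∧ μ m < 1 :=
    fun m hm => (Finset.mem_filter.1 hm).2
  have h1F0 : 1 ≤ ∑ m ∈ F0, μ m := by rw [← hsum0]; exact hs.le
  obtain ⟨F, hFsub, hF1, hF2⟩ := trim_finset μ F0 (fun m hm => (hmemF0 m hm).2.2) h1F0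
  exact ⟨F, fun m hm => hmemF0 m (hFsub hm), hF1, hF2⟩

variable (g : ℕ → ℝ)

/-- `g` as an `ℝ≥0∞`-valued function. -/
def Gm (m : ℕ) : ℝ≥0∞ := ENNReal.ofReal (g m)

/-- Total `g`-mass of the set where `c * g ≥ 2⁻¹ ^ j`. -/
def Tv (c : ℝ≥0∞) (j : ℕ) : ℝ≥0∞ :=
  ∑' m, Set.indicator {m' | (2 : ℝ≥0∞)⁻¹ ^ j ≤ c * Gm g m'} (Gm g) m

/-- Length of the `j`-th block. -/
def Lb (j : ℕ) : ℕ :=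
  ⌈((j : ℝ) + 1) * (1 + (Tv g ((j : ℝ≥0∞) + 1) j).toReal) * 2 ^ j⌉₊ + 1

/-- Start of the `j`-th block. -/
def Pb (j : ℕ) : ℕ := ∑ i ∈ Finset.range j, Lb g i

/-- The block containing `n`. -/
def blockOf (n : ℕ) : ℕ := Nat.findGreatest (fun j => Pb g j ≤ n) n

/-- The competing weight function. -/
def hfun (n : ℕ) : ℝ := (2 : ℝ)⁻¹ ^ blockOf g n

/-- `hfun` as an `ℝ≥0∞`-valued function. -/
def Hfun (n : ℕ) : ℝ≥0∞ := ENNReal.ofReal (hfun g n)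

lemma Hfun_eq (n : ℕ) : Hfun g n = (2 : ℝ≥0∞)⁻¹ ^ blockOf g n := by
  rw [Hfun, hfun, ENNReal.ofReal_pow (by norm_num), ENNReal.ofReal_inv_of_pos two_pos,
    ENNReal.ofReal_ofNat]

lemma Lb_pos (j : ℕ) : 0 < Lb g j := Nat.succ_pos _

lemma Pb_succ (j : ℕ) : Pb g (j + 1) = Pb g j + Lb g j := Finset.sum_range_succ _ _

lemma Pb_strictMono : StrictMono (Pb g) := by
  apply strictMono_nat_of_lt_succ
  intro j
  rw [Pb_succ]
  exact Nat.lt_add_of_pos_right (Lb_pos g j)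

lemma le_Pb (j : ℕ) : j ≤ Pb g j := by
  induction j with
  | zero => exact Nat.zero_le _
  | succ j ih =>
    rw [Pb_succ]
    exact Nat.add_le_add ih (Lb_pos g j)

lemma Pb_blockOf_le (n : ℕ) : Pb g (blockOf g n) ≤ n := by
  have h0 : Pb g 0 ≤ n := by simp [Pb]
  exact Nat.findGreatest_spec (P := fun j => Pb g j ≤ n) (Nat.zero_le n) h0

lemma lt_Pb_succ_blockOf (n : ℕ) : n < Pb g (blockOf g n + 1) := by
  by_contra hc
  push_neg at hc
  have h1 : blockOf g n + 1 ≤ n := le_trans (le_Pb g _) hc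
  have h2 : blockOf g n + 1 ≤ blockOf g n := Nat.le_findGreatest h1 hc
  omega

lemma blockOf_ge {j n : ℕ} (h : Pb g j ≤ n) : j ≤ blockOf g n :=
  Nat.le_findGreatest (le_trans (le_Pb g j) h) h

lemma blockOf_eq {j n : ℕ} (h1 : Pb g j ≤ n) (h2 : n < Pb g (j + 1)) : blockOf g n = j := by
  have hge : j ≤ blockOf g n := blockOf_ge g h1
  have hle : blockOf g n ≤ j := by
    by_contra hc
    push_neg at hc
    have h3 : Pb g (j + 1) ≤ Pb g (blockOf g n) := (Pb_strictMono g).monotone hc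
    have h4 := Pb_blockOf_le g n
    omega
  omega

lemma tendsto_blockOf : Tendsto (blockOf g) atTop atTop :=
  tendsto_atTop_atTop.2 fun j => ⟨Pb g j, fun _ hn => blockOf_ge g hn⟩

lemma hfun_pos (n : ℕ) : 0 < hfun g n := pow_pos (by norm_num) _

lemma tendsto_hfun : Tendsto (hfun g) atTop (nhds 0) := by
  have h1 : Tendsto (fun k : ℕ => (2 : ℝ)⁻¹ ^ k) atTop (nhds 0) :=
    tendsto_pow_atTop_nhds_zero_of_lt_one (by norm_num) (by norm_num)
  exact h1.comp (tendsto_blockOf g)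

lemma Tv_ne_top (htend : Tendsto g atTop (nhds 0)) (j : ℕ) :
    Tv g ((j : ℝ≥0∞) + 1) j ≠ ∞ := by
  set δ : ℝ := (2 : ℝ)⁻¹ ^ j / (j + 2) with hδ
  have hδpos : 0 < δ := by positivity
  obtain ⟨N, hN⟩ := eventually_atTop.1 (htend.eventually_lt_const hδpos)
  have hnot : ∀ m, N ≤ m → m ∉ {m' | (2 : ℝ≥0∞)⁻¹ ^ j ≤ ((j : ℝ≥0∞) + 1) * Gm g m'} := by
    intro m hm hmem
    simp only [Set.mem_setOf_eq] at hmem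
    have hval : ((j : ℝ≥0∞) + 1) * Gm g m < (2 : ℝ≥0∞)⁻¹ ^ j := by
      have e1 : ((j : ℝ≥0∞) + 1) = ENNReal.ofReal ((j : ℝ) + 1) := by
        rw [ENNReal.ofReal_add (by positivity) zero_le_one, ENNReal.ofReal_natCast,
          ENNReal.ofReal_one]
      have e2 : (2 : ℝ≥0∞)⁻¹ ^ j = ENNReal.ofReal ((2 : ℝ)⁻¹ ^ j) := by
        rw [ENNReal.ofReal_pow (by norm_num), ENNReal.ofReal_inv_of_pos two_pos,
          ENNReal.ofReal_ofNat]
      rw [e1, e2, Gm, ← ENNReal.ofReal_mul (by positivity)]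
      refine (ENNReal.ofReal_lt_ofReal_iff (by positivity)).2 ?_
      have hx : (0:ℝ) < (2 : ℝ)⁻¹ ^ j := by positivity
      have h1 : ((j : ℝ) + 1) * g m < ((j : ℝ) + 1) * δ :=
        mul_lt_mul_of_pos_left (hN m hm) (by positivity)
      have h2 : ((j : ℝ) + 1) * δ < (2 : ℝ)⁻¹ ^ j := by
        rw [hδ, mul_comm, div_mul_eq_mul_div, div_lt_iff₀ (by positivity)]
        nlinarith
      linarith
    exact absurd hmem (not_le.2 hval)
  have heq : Tv g ((j : ℝ≥0∞) + 1) j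
      = ∑ m ∈ Finset.range N,
          Set.indicator {m' | (2 : ℝ≥0∞)⁻¹ ^ j ≤ ((j : ℝ≥0∞) + 1) * Gm g m'} (Gm g) m := by
    rw [Tv]
    refine tsum_eq_sum fun m hm => ?_
    exact Set.indicator_of_notMem (hnot m (Nat.le_of_not_lt (by simpa using hm))) _
  rw [heq]
  refine (ENNReal.sum_lt_top.2 fun m _ => ?_).ne
  by_cases hm : m ∈ {m' | (2 : ℝ≥0∞)⁻¹ ^ j ≤ ((j : ℝ≥0∞) + 1) * Gm g m'}
  · rw [Set.indicator_of_mem hm]; exact ENNReal.ofReal_lt_top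
  · rw [Set.indicator_of_notMem hm]; exact ENNReal.zero_lt_top

lemma block_sum (j : ℕ) :
    ∑ n ∈ Finset.Ico (Pb g j) (Pb g (j + 1)), Hfun g n
      = (Lb g j : ℝ≥0∞) * (2 : ℝ≥0∞)⁻¹ ^ j := by
  have hval : ∀ n ∈ Finset.Ico (Pb g j) (Pb g (j + 1)), Hfun g n = (2 : ℝ≥0∞)⁻¹ ^ j := by
    intro n hn
    rw [Finset.mem_Ico] at hn
    rw [Hfun_eq, blockOf_eq g hn.1 hn.2]
  rw [Finset.sum_congr rfl hval, Finset.sum_const, Nat.card_Ico, Pb_succ,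
    Nat.add_sub_cancel_left, nsmul_eq_mul]

lemma block_sum_ge (htend : Tendsto g atTop (nhds 0)) (j : ℕ) :
    ((j : ℝ≥0∞) + 1) * (1 + Tv g ((j : ℝ≥0∞) + 1) j)
      ≤ (Lb g j : ℝ≥0∞) * (2 : ℝ≥0∞)⁻¹ ^ j := by
  set t : ℝ≥0∞ := Tv g ((j : ℝ≥0∞) + 1) j with ht
  have htne : t ≠ ∞ := Tv_ne_top g htend j
  set c : ℝ := ((j : ℝ) + 1) * (1 + t.toReal) with hc
  have hc0 : (0:ℝ) ≤ c := by
    have := ENNReal.toReal_nonneg (a := t); positivity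
  have hL : c * 2 ^ j ≤ (Lb g j : ℝ) := by
    rw [Lb]
    push_cast
    have := Nat.le_ceil (c * 2 ^ j)
    rw [hc] at this ⊢
    linarith
  have hL2 : c ≤ (Lb g j : ℝ) * (2:ℝ)⁻¹ ^ j := by
    have hid : c = c * 2 ^ j * (2:ℝ)⁻¹ ^ j := by
      rw [mul_assoc, ← mul_pow]; norm_num
    rw [hid]
    exact mul_le_mul_of_nonneg_right hL (by positivity)
  have lhs_eq : ((j : ℝ≥0∞) + 1) * (1 + t) = ENNReal.ofReal c := by
    rw [hc, ENNReal.ofReal_mul (by positivity), ENNReal.ofReal_add zero_le_one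
      ENNReal.toReal_nonneg, ENNReal.ofReal_one, ENNReal.ofReal_toReal htne,
      ENNReal.ofReal_add (by positivity) zero_le_one, ENNReal.ofReal_natCast,
      ENNReal.ofReal_one]
  rw [lhs_eq]
  calc ENNReal.ofReal c ≤ ENNReal.ofReal ((Lb g j : ℝ) * (2:ℝ)⁻¹ ^ j) :=
        ENNReal.ofReal_le_ofReal hL2
    _ = (Lb g j : ℝ≥0∞) * (2 : ℝ≥0∞)⁻¹ ^ j := by
        rw [ENNReal.ofReal_mul (by positivity), ENNReal.ofReal_natCast,
          ENNReal.ofReal_pow (by norm_num), ENNReal.ofReal_inv_of_pos two_pos,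
          ENNReal.ofReal_ofNat]

lemma tsum_Hfun_eq_top (htend : Tendsto g atTop (nhds 0)) : ∑' n, Hfun g n = ∞ := by
  by_contra hc
  obtain ⟨N, hN⟩ := ENNReal.exists_nat_gt hc
  have h1 : ((N : ℝ≥0∞) + 1) ≤ ∑' n, Hfun g n := by
    calc ((N : ℝ≥0∞) + 1) = ((N : ℝ≥0∞) + 1) * 1 := (mul_one _).symm
      _ ≤ ((N : ℝ≥0∞) + 1) * (1 + Tv g ((N : ℝ≥0∞) + 1) N) := by
          exact mul_le_mul' le_rfl le_self_add
      _ ≤ (Lb g N : ℝ≥0∞) * (2 : ℝ≥0∞)⁻¹ ^ N := block_sum_ge g htend N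
      _ = ∑ n ∈ Finset.Ico (Pb g N) (Pb g (N + 1)), Hfun g n := (block_sum g N).symm
      _ ≤ ∑' n, Hfun g n := ENNReal.sum_le_tsum _
  have h2 : (∑' n, Hfun g n) < (N : ℝ≥0∞) + 1 :=
    lt_trans hN (ENNReal.lt_add_right (ENNReal.natCast_ne_top N) one_ne_zero)
  exact absurd h1 (not_le.2 h2)

lemma main_estimate (htend : Tendsto g atTop (nhds 0)) (f : ℕ → ℕ) (k : ℕ) :
    ∑' m, Set.indicator
      {m' | (2 : ℝ≥0∞) ^ k * Gm g m' < ∑' n, (f ⁻¹' {m'}).indicator (Hfun g) n}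
      (fun m' => ∑' n, (f ⁻¹' {m'}).indicator (Hfun g) n) m = ∞ := by
  classical
  set μ : ℕ → ℝ≥0∞ := fun m => ∑' n, (f ⁻¹' {m}).indicator (Hfun g) n with hμ
  set Bad : Set ℕ := {m' | (2 : ℝ≥0∞) ^ k * Gm g m' < μ m'} with hBad
  by_contra hK
  set K : ℝ≥0∞ := ∑' m, Bad.indicator μ m with hKdef
  obtain ⟨N, hN⟩ := ENNReal.exists_nat_gt hK
  set j : ℕ := max N (2 ^ k) with hj
  have hjN : N ≤ j := le_max_left _ _
  have hjk : 2 ^ k ≤ j := le_max_right _ _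
  have hC : (2 : ℝ≥0∞) ^ k ≤ (j : ℝ≥0∞) + 1 := by
    calc (2 : ℝ≥0∞) ^ k = ((2 ^ k : ℕ) : ℝ≥0∞) := by push_cast; ring
      _ ≤ (j : ℝ≥0∞) := Nat.cast_le.2 hjk
      _ ≤ (j : ℝ≥0∞) + 1 := le_self_add
  set B : Finset ℕ := Finset.Ico (Pb g j) (Pb g (j + 1)) with hB
  have hsplit : ∑ n ∈ B.filter (fun n => f n ∈ Bad), Hfun g n
      + ∑ n ∈ B.filter (fun n => ¬ f n ∈ Bad), Hfun g n = ∑ n ∈ B, Hfun g n :=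
    Finset.sum_filter_add_sum_filter_not B _ _
  -- first part is at most K
  have hbound1 : ∑ n ∈ B.filter (fun n => f n ∈ Bad), Hfun g n ≤ K := by
    have hcongr : ∀ n ∈ B.filter (fun n => f n ∈ Bad), Hfun g n
        = (f ⁻¹' Bad).indicator (Hfun g) n := by
      intro n hn
      exact (Set.indicator_of_mem
        (show n ∈ f ⁻¹' Bad from (Finset.mem_filter.1 hn).2) (Hfun g)).symm
    rw [Finset.sum_congr rfl hcongr]
    calc ∑ n ∈ B.filter (fun n => f n ∈ Bad), (f ⁻¹' Bad).indicator (Hfun g) n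
        ≤ ∑' n, (f ⁻¹' Bad).indicator (Hfun g) n := ENNReal.sum_le_tsum _
      _ = ∑' m, Bad.indicator (fun m' => ∑' n, (f ⁻¹' {m'}).indicator (Hfun g) n) m :=
          tsum_preimage_indicator f (Hfun g) Bad
      _ = K := rfl
  -- second part
  set S : Set ℕ := {m' | ((2 : ℝ≥0∞)⁻¹ ^ j ≤ (2 : ℝ≥0∞) ^ k * Gm g m')
      ∧ μ m' ≤ (2 : ℝ≥0∞) ^ k * Gm g m'} with hS
  have hmemS : ∀ n ∈ B.filter (fun n => ¬ f n ∈ Bad), f n ∈ S := by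
    intro n hn
    obtain ⟨hnB, hnG⟩ := Finset.mem_filter.1 hn
    rw [hB, Finset.mem_Ico] at hnB
    have hHn : Hfun g n = (2 : ℝ≥0∞)⁻¹ ^ j := by
      rw [Hfun_eq, blockOf_eq g hnB.1 hnB.2]
    have hμge : (2 : ℝ≥0∞)⁻¹ ^ j ≤ μ (f n) := by
      have hmem : n ∈ f ⁻¹' {f n} := rfl
      have := ENNReal.le_tsum (f := fun n' => (f ⁻¹' {f n}).indicator (Hfun g) n') n
      rw [Set.indicator_of_mem hmem] at this
      rw [← hHn]
      exact this
    have hμle : μ (f n) ≤ (2 : ℝ≥0∞) ^ k * Gm g (f n) := not_lt.1 hnG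
    exact ⟨le_trans hμge hμle, hμle⟩
  have hbound2 : ∑ n ∈ B.filter (fun n => ¬ f n ∈ Bad), Hfun g n
      ≤ ((j : ℝ≥0∞) + 1) * Tv g ((j : ℝ≥0∞) + 1) j := by
    have hcongr : ∀ n ∈ B.filter (fun n => ¬ f n ∈ Bad), Hfun g n
        = (f ⁻¹' S).indicator (Hfun g) n := by
      intro n hn
      exact (Set.indicator_of_mem (show n ∈ f ⁻¹' S from hmemS n hn) (Hfun g)).symm
    rw [Finset.sum_congr rfl hcongr]
    calc ∑ n ∈ B.filter (fun n => ¬ f n ∈ Bad), (f ⁻¹' S).indicator (Hfun g) n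
        ≤ ∑' n, (f ⁻¹' S).indicator (Hfun g) n := ENNReal.sum_le_tsum _
      _ = ∑' m, S.indicator μ m := tsum_preimage_indicator f (Hfun g) S
      _ ≤ ∑' m, S.indicator (fun m' => (2 : ℝ≥0∞) ^ k * Gm g m') m := by
          refine ENNReal.tsum_le_tsum fun m => ?_
          by_cases hm : m ∈ S
          · rw [Set.indicator_of_mem hm, Set.indicator_of_mem hm]
            exact hm.2
          · rw [Set.indicator_of_notMem hm, Set.indicator_of_notMem hm]
      _ ≤ ∑' m, Set.indicator {m' | (2 : ℝ≥0∞)⁻¹ ^ j ≤ (2 : ℝ≥0∞) ^ k * Gm g m'}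
            (fun m' => (2 : ℝ≥0∞) ^ k * Gm g m') m := by
          refine ENNReal.tsum_le_tsum fun m => ?_
          exact Set.indicator_le_indicator_of_subset (fun m' hm' => hm'.1)
            (fun m' => zero_le) m
      _ = (2 : ℝ≥0∞) ^ k * Tv g ((2 : ℝ≥0∞) ^ k) j := by
          rw [Tv, ← ENNReal.tsum_mul_left]
          refine tsum_congr fun m => ?_
          by_cases hm : m ∈ {m' | (2 : ℝ≥0∞)⁻¹ ^ j ≤ (2 : ℝ≥0∞) ^ k * Gm g m'}
          · rw [Set.indicator_of_mem hm, Set.indicator_of_mem hm]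
          · rw [Set.indicator_of_notMem hm, Set.indicator_of_notMem hm, mul_zero]
      _ ≤ ((j : ℝ≥0∞) + 1) * Tv g ((j : ℝ≥0∞) + 1) j := by
          refine mul_le_mul' hC ?_
          rw [Tv, Tv]
          refine ENNReal.tsum_le_tsum fun m => ?_
          refine Set.indicator_le_indicator_of_subset ?_ (fun m' => zero_le) m
          intro m' hm'
          exact le_trans hm' (mul_le_mul_left hC _)
  -- combine
  have hfinal : ((j : ℝ≥0∞) + 1) + ((j : ℝ≥0∞) + 1) * Tv g ((j : ℝ≥0∞) + 1) j
      ≤ K + ((j : ℝ≥0∞) + 1) * Tv g ((j : ℝ≥0∞) + 1) j := by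
    calc ((j : ℝ≥0∞) + 1) + ((j : ℝ≥0∞) + 1) * Tv g ((j : ℝ≥0∞) + 1) j
        = ((j : ℝ≥0∞) + 1) * (1 + Tv g ((j : ℝ≥0∞) + 1) j) := by rw [mul_add, mul_one]
      _ ≤ (Lb g j : ℝ≥0∞) * (2 : ℝ≥0∞)⁻¹ ^ j := block_sum_ge g htend j
      _ = ∑ n ∈ B, Hfun g n := (block_sum g j).symm
      _ = ∑ n ∈ B.filter (fun n => f n ∈ Bad), Hfun g n
          + ∑ n ∈ B.filter (fun n => ¬ f n ∈ Bad), Hfun g n := hsplit.symm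
      _ ≤ K + ((j : ℝ≥0∞) + 1) * Tv g ((j : ℝ≥0∞) + 1) j := add_le_add hbound1 hbound2
  have hcancel : ((j : ℝ≥0∞) + 1) ≤ K :=
    (ENNReal.add_le_add_iff_right (ENNReal.mul_ne_top
      (by simp [ENNReal.add_ne_top, ENNReal.natCast_ne_top]) (Tv_ne_top g htend j))).1 hfinal
  have : ((j : ℝ≥0∞) + 1) < ((j : ℝ≥0∞) + 1) := by
    calc ((j : ℝ≥0∞) + 1) ≤ K := hcancel
      _ < (N : ℝ≥0∞) := hN
      _ ≤ (j : ℝ≥0∞) := Nat.cast_le.2 hjN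
      _ < (j : ℝ≥0∞) + 1 := ENNReal.lt_add_right (ENNReal.natCast_ne_top j) one_ne_zero
  exact absurd this (lt_irrefl _)

end NoMinConstruction

open scoped ENNReal

theorem noMinimals (g : ℕ → ℝ) (hg : SummableTall g) :
    ∃ h : ℕ → ℝ, SummableTall h ∧
      ∀ f : ℕ → ℕ, ∃ A ∈ Ig g, f ⁻¹' A ∉ Ig h := by
  classical
  obtain ⟨hgpos, _hgdiv, hgtend⟩ := hg
  refine ⟨hfun g, ⟨hfun_pos g, ?_, tendsto_hfun g⟩, ?_⟩
  · intro hs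
    exact (summable_iff_ofReal_ne_top fun n => (hfun_pos g n).le).1 hs
      (tsum_Hfun_eq_top g hgtend)
  · intro f
    set μ : ℕ → ℝ≥0∞ := fun m => ∑' n, (f ⁻¹' {m}).indicator (Hfun g) n with hμ
    have key : ∀ A : Set ℕ, Summable (A.indicator g) → (∑' m, A.indicator μ m = ∞) →
        ∃ A' ∈ Ig g, f ⁻¹' A' ∉ Ig (hfun g) := by
      intro A hAsum hAtop
      refine ⟨A, hAsum, ?_⟩
      intro hsum
      have hnn : ∀ n, 0 ≤ (f ⁻¹' A).indicator (hfun g) n :=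
        fun n => Set.indicator_apply_nonneg fun _ => (hfun_pos g _).le
      refine (summable_iff_ofReal_ne_top hnn).1 hsum ?_
      have heq : ∀ n, ENNReal.ofReal ((f ⁻¹' A).indicator (hfun g) n)
          = (f ⁻¹' A).indicator (Hfun g) n := by
        intro n
        by_cases hn : n ∈ f ⁻¹' A
        · rw [Set.indicator_of_mem hn, Set.indicator_of_mem hn]; rfl
        · rw [Set.indicator_of_notMem hn, Set.indicator_of_notMem hn, ENNReal.ofReal_zero]
      calc ∑' n, ENNReal.ofReal ((f ⁻¹' A).indicator (hfun g) n)
          = ∑' n, (f ⁻¹' A).indicator (Hfun g) n := tsum_congr heq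
        _ = ∑' m, A.indicator (fun m' => ∑' n, (f ⁻¹' {m'}).indicator (Hfun g) n) m :=
            tsum_preimage_indicator f (Hfun g) A
        _ = ∞ := hAtop
    by_cases hcase1 : ∃ m0, μ m0 = ∞
    · obtain ⟨m0, hm0⟩ := hcase1
      refine key {m0} ?_ ?_
      · exact summable_of_ne_finset_zero (s := {m0})
          fun m hm => Set.indicator_of_notMem (by simpa using hm) g
      · refine top_le_iff.1 ?_
        have hle := ENNReal.le_tsum (f := fun m => ({m0} : Set ℕ).indicator μ m) m0
        rw [Set.indicator_of_mem (Set.mem_singleton m0) μ, hm0] at hle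
        exact hle
    · push_neg at hcase1
      by_cases hcase2 : ∃ i : ℕ, {m | (2 : ℝ≥0∞)⁻¹ ^ i ≤ μ m}.Infinite
      · obtain ⟨i0, hD⟩ := hcase2
        have hψmono : StrictMono (Nat.nth (fun m => (2 : ℝ≥0∞)⁻¹ ^ i0 ≤ μ m)) :=
          Nat.nth_strictMono hD
        have hψmem : ∀ n, (2 : ℝ≥0∞)⁻¹ ^ i0
            ≤ μ (Nat.nth (fun m => (2 : ℝ≥0∞)⁻¹ ^ i0 ≤ μ m) n) :=
          fun n => Nat.nth_mem_of_infinite hD n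
        set ψ := Nat.nth (fun m => (2 : ℝ≥0∞)⁻¹ ^ i0 ≤ μ m) with hψdef
        have hψtop : Tendsto ψ atTop atTop :=
          tendsto_atTop_mono (fun n => hψmono.le_apply) tendsto_id
        have hgψ : Tendsto (fun n => g (ψ n)) atTop (nhds 0) := hgtend.comp hψtop
        have hev : ∀ i : ℕ, ∀ᶠ n in atTop, g (ψ n) < (2 : ℝ)⁻¹ ^ i :=
          fun i => hgψ.eventually_lt_const (by positivity)
        obtain ⟨φ, hφmono, hφ⟩ := extraction_forall_of_eventually hev
        set θ : ℕ → ℕ := fun i => ψ (φ i) with hθdef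
        have hθmono : StrictMono θ := hψmono.comp hφmono
        refine key (Set.range θ) ?_ ?_
        · have hcomp : Summable ((Set.range θ).indicator g ∘ θ) := by
            refine Summable.of_nonneg_of_le (fun i => ?_) (fun i => ?_)
              (summable_geometric_of_lt_one (r := (2 : ℝ)⁻¹) (by norm_num) (by norm_num))
            · exact Set.indicator_apply_nonneg fun _ => (hgpos _).le
            · rw [Function.comp_apply, Set.indicator_of_mem (Set.mem_range_self i)]
              exact (hφ i).le
          exact (hθmono.injective.summable_iff
            fun m hm => Set.indicator_of_notMem hm g).1 hcomp
        · refine top_le_iff.1 ?_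
          have h4 : ∑' _i : ℕ, (2 : ℝ≥0∞)⁻¹ ^ i0 = ∞ :=
            ENNReal.tsum_const_eq_top_of_ne_zero (pow_ne_zero _ (by simp))
          calc (⊤ : ℝ≥0∞) = ∑' _i : ℕ, (2 : ℝ≥0∞)⁻¹ ^ i0 := h4.symm
            _ ≤ ∑' i, (Set.range θ).indicator μ (θ i) := by
                refine ENNReal.tsum_le_tsum fun i => ?_
                rw [Set.indicator_of_mem (Set.mem_range_self i)]
                exact hψmem (φ i)
            _ ≤ ∑' m, (Set.range θ).indicator μ m :=
                ENNReal.tsum_comp_le_tsum_of_injective hθmono.injective _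
      · push_neg at hcase2
        have hone : {m | 1 ≤ μ m}.Finite := by
          have h0 := hcase2 0
          simpa using h0
        have hstep : ∀ k N : ℕ, ∃ F : Finset ℕ,
            (∀ m ∈ F, m ∈ {m' | (2 : ℝ≥0∞) ^ k * Gm g m' < μ m'} ∧ N < m ∧ μ m < 1)
            ∧ 1 ≤ ∑ m ∈ F, μ m ∧ ∑ m ∈ F, μ m ≤ 2 := by
          intro k N
          refine exists_step_finset μ hcase1 hone _ ?_ N
          exact main_estimate g hgtend f k
        choose FF hFF1 hFF2 hFF3 using hstep
        let Bd : ℕ → ℕ := fun k =>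
          Nat.rec (motive := fun _ => ℕ) 0 (fun k' Bk => max Bk ((FF k' Bk).sup id)) k
        let F : ℕ → Finset ℕ := fun k => FF k (Bd k)
        have hBd : ∀ k, Bd (k + 1) = max (Bd k) ((F k).sup id) := fun k => rfl
        have hmem : ∀ k, ∀ m ∈ F k,
            ((2 : ℝ≥0∞) ^ k * Gm g m < μ m) ∧ Bd k < m ∧ μ m < 1 :=
          fun k m hm => hFF1 k (Bd k) m hm
        have hBdmono : Monotone Bd := monotone_nat_of_le_succ fun k => by
          rw [hBd]; exact le_max_left _ _
        have hub : ∀ k, ∀ m ∈ F k, m ≤ Bd (k + 1) := by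
          intro k m hm
          rw [hBd]
          exact le_trans (Finset.le_sup (f := id) hm) (le_max_right _ _)
        have hdisj : ∀ k l, k < l → ∀ m, m ∈ F k → m ∈ F l → False := by
          intro k l hkl m hmk hml
          have h1 : m ≤ Bd (k + 1) := hub k m hmk
          have h2 : Bd (k + 1) ≤ Bd l := hBdmono hkl
          have h3 : Bd l < m := (hmem l m hml).2.1
          omega
        set A : Set ℕ := ⋃ k, (↑(F k) : Set ℕ) with hA
        refine key A ?_ ?_
        · have hF_Gm : ∀ k, ∑ m ∈ F k, Gm g m ≤ (2 : ℝ≥0∞)⁻¹ ^ k * 2 := by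
            intro k
            calc ∑ m ∈ F k, Gm g m ≤ ∑ m ∈ F k, (2 : ℝ≥0∞)⁻¹ ^ k * μ m := by
                  refine Finset.sum_le_sum fun m hm => ?_
                  have h1 := (hmem k m hm).1.le
                  calc Gm g m = (2 : ℝ≥0∞)⁻¹ ^ k * ((2 : ℝ≥0∞) ^ k * Gm g m) := by
                        rw [← mul_assoc, ← mul_pow, ENNReal.inv_mul_cancel (by norm_num)
                          (by norm_num), one_pow, one_mul]
                    _ ≤ (2 : ℝ≥0∞)⁻¹ ^ k * μ m := mul_le_mul_right h1 _
              _ = (2 : ℝ≥0∞)⁻¹ ^ k * ∑ m ∈ F k, μ m := by rw [Finset.mul_sum]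
              _ ≤ (2 : ℝ≥0∞)⁻¹ ^ k * 2 := mul_le_mul_right (hFF3 k (Bd k)) _
          have htsumA : ∑' m, A.indicator (Gm g) m ≠ ∞ := by
            have h1 : ∀ m, A.indicator (Gm g) m
                ≤ ∑' k, (↑(F k) : Set ℕ).indicator (Gm g) m := by
              intro m
              by_cases hm : m ∈ A
              · obtain ⟨k, hk⟩ := Set.mem_iUnion.1 hm
                calc A.indicator (Gm g) m = Gm g m := Set.indicator_of_mem hm _
                  _ = (↑(F k) : Set ℕ).indicator (Gm g) m := (Set.indicator_of_mem hk _).symm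
                  _ ≤ ∑' k', (↑(F k') : Set ℕ).indicator (Gm g) m := ENNReal.le_tsum k
              · rw [Set.indicator_of_notMem hm]; exact zero_le
            have h2 : ∑' m, A.indicator (Gm g) m ≤ (1 - 2⁻¹)⁻¹ * 2 := by
              calc ∑' m, A.indicator (Gm g) m
                  ≤ ∑' m, ∑' k, (↑(F k) : Set ℕ).indicator (Gm g) m :=
                    ENNReal.tsum_le_tsum h1
                _ = ∑' k, ∑' m, (↑(F k) : Set ℕ).indicator (Gm g) m := ENNReal.tsum_comm
                _ ≤ ∑' k, (2 : ℝ≥0∞)⁻¹ ^ k * 2 := by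
                    refine ENNReal.tsum_le_tsum fun k => ?_
                    have heqk : ∑' m, (↑(F k) : Set ℕ).indicator (Gm g) m
                        = ∑ m ∈ F k, Gm g m := by
                      rw [tsum_eq_sum (s := F k)
                        (fun m hm => Set.indicator_of_notMem (by simpa using hm) _)]
                      exact Finset.sum_congr rfl fun m hm =>
                        Set.indicator_of_mem (by simpa using hm) _
                    rw [heqk]; exact hF_Gm k
                _ = (∑' k, (2 : ℝ≥0∞)⁻¹ ^ k) * 2 := ENNReal.tsum_mul_right
                _ = (1 - 2⁻¹)⁻¹ * 2 := by rw [ENNReal.tsum_geometric]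
            refine ne_top_of_le_ne_top ?_ h2
            rw [ENNReal.one_sub_inv_two, inv_inv]
            exact ENNReal.mul_ne_top ENNReal.ofNat_ne_top ENNReal.ofNat_ne_top
          have heq : ∀ m, ENNReal.ofReal (A.indicator g m) = A.indicator (Gm g) m := by
            intro m
            by_cases hm : m ∈ A
            · rw [Set.indicator_of_mem hm, Set.indicator_of_mem hm]; rfl
            · rw [Set.indicator_of_notMem hm, Set.indicator_of_notMem hm,
                ENNReal.ofReal_zero]
          refine (summable_iff_ofReal_ne_top
            (fun m => Set.indicator_apply_nonneg fun _ => (hgpos _).le)).2 ?_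
          rw [tsum_congr heq]
          exact htsumA
        · by_contra hcon
          obtain ⟨K, hK⟩ := ENNReal.exists_nat_gt hcon
          have hdisj' : (↑(Finset.range K) : Set ℕ).PairwiseDisjoint F := by
            intro k _ l _ hkl
            refine Finset.disjoint_left.2 fun {m} hmk hml => ?_
            rcases lt_or_gt_of_ne hkl with h | h
            · exact hdisj k l h m hmk hml
            · exact hdisj l k h m hml hmk
          have hU : ∑ m ∈ (Finset.range K).biUnion F, μ m
              = ∑ k ∈ Finset.range K, ∑ m ∈ F k, μ m := Finset.sum_biUnion hdisj'
          have hKle : (K : ℝ≥0∞) ≤ ∑' m, A.indicator μ m := by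
            calc (K : ℝ≥0∞) = ∑ _k ∈ Finset.range K, (1 : ℝ≥0∞) := by simp
              _ ≤ ∑ k ∈ Finset.range K, ∑ m ∈ F k, μ m :=
                  Finset.sum_le_sum fun k _ => hFF2 k (Bd k)
              _ = ∑ m ∈ (Finset.range K).biUnion F, μ m := hU.symm
              _ = ∑ m ∈ (Finset.range K).biUnion F, A.indicator μ m := by
                  refine Finset.sum_congr rfl fun m hm => ?_
                  obtain ⟨k, _, hmk⟩ := Finset.mem_biUnion.1 hm
                  exact (Set.indicator_of_mem
                    (Set.mem_iUnion.2 ⟨k, Finset.mem_coe.2 hmk⟩) μ).symm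
              _ ≤ ∑' m, A.indicator μ m := ENNReal.sum_le_tsum _
          exact absurd hKle (not_le.2 hK)
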